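/- Let A ∈ B(𝓗) be self-adjoint with spectrum contained in [δ,∞) for some δ > 0. Then the map x ↦ √A·(x²·1 + A)⁻¹ is Bochner integrable on (0,∞) and (2/π) · ∫_{(0,∞)} √A·(x²·1 + A)⁻¹ dx = 1, the integral being a Bochner integral in the Banach space B(𝓗). -/

import Mathlib

open MeasureTheory
set_option synthInstance.maxHeartbeats 1000000
set_option maxHeartbeats 1000000

variable {𝓗 : Type*} [NormedAddCommGroup 𝓗] [InnerProductSpace ℂ 𝓗] [CompleteSpace 𝓗]

lemma aux_integrable {t : ℝ} (ht : 0 < t) :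
    IntegrableOn (fun x : ℝ => (x ^ 2 + t)⁻¹) (Set.Ioi 0) := by
  have hs : 0 < Real.sqrt t := Real.sqrt_pos.mpr ht
  have h2 : (Real.sqrt t) ^ 2 = t := Real.sq_sqrt ht.le
  have key : ∀ x : ℝ, (x ^ 2 + t)⁻¹ = t⁻¹ * (1 + ((Real.sqrt t)⁻¹ * x) ^ 2)⁻¹ := by
    intro x
    rw [mul_pow, inv_pow, h2]
    have hx : 0 < x ^ 2 + t := by positivity
    field_simp
    ring
  simp_rw [key]
  apply Integrable.const_mul
  have := (integrableOn_Ioi_comp_mul_left_iff (fun y : ℝ => (1 + y ^ 2)⁻¹) 0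
    (inv_pos.mpr hs)).mpr (by simpa using integrable_inv_one_add_sq.integrableOn)
  have h' : IntegrableOn (fun x : ℝ => (1 + ((Real.sqrt t)⁻¹ * x) ^ 2)⁻¹) (Set.Ioi 0) := by
    simpa using this
  exact h'

lemma aux_integral {t : ℝ} (ht : 0 < t) :
    ∫ x in Set.Ioi (0:ℝ), Real.sqrt t * (x ^ 2 + t)⁻¹ = Real.pi / 2 := by
  have hs : 0 < Real.sqrt t := Real.sqrt_pos.mpr ht
  have h2 : (Real.sqrt t) ^ 2 = t := Real.sq_sqrt ht.le
  have key : ∀ x : ℝ, (x ^ 2 + t)⁻¹ = t⁻¹ * (1 + ((Real.sqrt t)⁻¹ * x) ^ 2)⁻¹ := by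
    intro x
    rw [mul_pow, inv_pow, h2]
    have hx : 0 < x ^ 2 + t := by positivity
    field_simp
    ring
  simp_rw [key, ← mul_assoc]
  rw [integral_const_mul]
  have := integral_comp_mul_left_Ioi (fun y : ℝ => (1 + y ^ 2)⁻¹) 0 (inv_pos.mpr hs)
  simp only [mul_zero] at this
  rw [this, integral_Ioi_inv_one_add_sq]
  rw [Real.arctan_zero, sub_zero, smul_eq_mul, inv_inv]
  rw [show Real.sqrt t * t⁻¹ * (Real.sqrt t * (Real.pi / 2))
      = (Real.sqrt t * Real.sqrt t) * t⁻¹ * (Real.pi / 2) by ring,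
    Real.mul_self_sqrt ht.le, mul_inv_cancel₀ ht.ne', one_mul]


/-- For self-adjoint `A` with spectrum in `[δ,∞)`, `δ > 0`, the map
`x ↦ √A·(x²·1 + A)⁻¹` is Bochner integrable on `(0,∞)` and
`(2/π) · ∫_{(0,∞)} √A·(x²·1 + A)⁻¹ dx = 1`. -/
theorem stmt_2 (A : 𝓗 →L[ℂ] 𝓗) (hA : IsSelfAdjoint A) (δ : ℝ) (hδ : 0 < δ)
    (hspec : spectrum ℝ A ⊆ Set.Ici δ) :
    IntegrableOn (fun x : ℝ => CFC.sqrt A * Ring.inverse (x ^ 2 • (1 : 𝓗 →L[ℂ] 𝓗) + A))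
      (Set.Ioi 0) ∧
    (2 / Real.pi) • (∫ x in Set.Ioi (0 : ℝ),
        CFC.sqrt A * Ring.inverse (x ^ 2 • (1 : 𝓗 →L[ℂ] 𝓗) + A)) = (1 : 𝓗 →L[ℂ] 𝓗) := by
  rcases subsingleton_or_nontrivial 𝓗 with hsub | hnt
  · have h0 : ∀ x : ℝ, CFC.sqrt A * Ring.inverse (x ^ 2 • (1 : 𝓗 →L[ℂ] 𝓗) + A) = 0 :=
      fun x => Subsingleton.elim _ _
    constructor
    · simp_rw [h0]; exact integrableOn_zero
    · exact Subsingleton.elim _ _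
  have hApos : (0 : 𝓗 →L[ℂ] 𝓗) ≤ A := by
    rw [StarOrderedRing.nonneg_iff_spectrum_nonneg (R := ℝ) A]
    exact fun x hx => hδ.le.trans (hspec hx)
  -- `CFC.sqrt` as real cfc
  have hsqrt : CFC.sqrt A = cfc Real.sqrt A := by
    rw [CFC.sqrt_eq_cfc, cfc_nnreal_eq_real _ A hApos]
    exact cfc_congr fun x hx => by rw [Real.coe_sqrt, Real.coe_toNNReal _ (hδ.le.trans (hspec hx))]
  -- positivity of spectrum values
  have hpos : ∀ t : ℝ, t ∈ spectrum ℝ A → 0 < t := fun t ht => hδ.trans_le (hspec ht)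
  have hden : ∀ (x : ℝ) (t : ℝ), t ∈ spectrum ℝ A → x ^ 2 + t ≠ 0 := by
    intro x t ht
    have := hpos t ht
    positivity
  -- rewrite the integrand through cfc
  have key : ∀ x : ℝ, CFC.sqrt A * Ring.inverse (x ^ 2 • (1 : 𝓗 →L[ℂ] 𝓗) + A)
      = cfc (fun t : ℝ => Real.sqrt t * (x ^ 2 + t)⁻¹) A := by
    intro x
    have hadd : x ^ 2 • (1 : 𝓗 →L[ℂ] 𝓗) + A = cfc (fun t : ℝ => x ^ 2 + t) A := by
      rw [cfc_const_add _ _ _, cfc_id' ℝ A, Algebra.algebraMap_eq_smul_one]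
    have hc2 : ContinuousOn (fun t : ℝ => (x ^ 2 + t)⁻¹) (spectrum ℝ A) :=
      ContinuousOn.inv₀ (by fun_prop) (fun t ht => hden x t ht)
    rw [hadd, ← cfc_inv (fun t : ℝ => x ^ 2 + t) A (hden x), hsqrt,
      ← cfc_mul Real.sqrt (fun t : ℝ => (x ^ 2 + t)⁻¹) A
        Real.continuous_sqrt.continuousOn hc2]
  -- the CLM version of cfcHom
  let φ := cfcHom (R := ℝ) hA
  let ψ : C(spectrum ℝ A, ℝ) →L[ℝ] (𝓗 →L[ℂ] 𝓗) :=
    { toFun := φ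
      map_add' := fun f g => map_add φ f g
      map_smul' := fun c f => map_smul φ c f
      cont := (cfcHom_isClosedEmbedding (R := ℝ) hA).continuous }
  -- the ContinuousMap-valued family
  have hFcont : Continuous (fun p : ℝ × spectrum ℝ A =>
      Real.sqrt (p.2 : ℝ) * ((p.1 : ℝ) ^ 2 + (p.2 : ℝ))⁻¹) := by
    apply Continuous.mul
    · exact Real.continuous_sqrt.comp (continuous_subtype_val.comp continuous_snd)
    · exact Continuous.inv₀ (((continuous_fst.pow 2)).add
        (continuous_subtype_val.comp continuous_snd))
        (fun p => hden p.1 p.2 p.2.2)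
  let F : C(ℝ × spectrum ℝ A, ℝ) := ⟨_, hFcont⟩
  let G : ℝ → C(spectrum ℝ A, ℝ) := fun x => F.curry x
  have hGcont : Continuous G := F.curry.continuous
  -- pointwise identification
  have hψG : ∀ x : ℝ, ψ (G x) = cfc (fun t : ℝ => Real.sqrt t * (x ^ 2 + t)⁻¹) A := by
    intro x
    rw [cfc_apply (fun t : ℝ => Real.sqrt t * (x ^ 2 + t)⁻¹) A (ha := hA)
      (hf := ContinuousOn.mul Real.continuous_sqrt.continuousOn
        (ContinuousOn.inv₀ (by fun_prop) (fun t ht => hden x t ht)))]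
    rfl
  -- norm bound
  have hnorm : ∀ x : ℝ, ‖G x‖ ≤ Real.sqrt ‖A‖ * ((x : ℝ) ^ 2 + δ)⁻¹ := by
    intro x
    have h0 : (0:ℝ) ≤ Real.sqrt ‖A‖ * (x ^ 2 + δ)⁻¹ := by positivity
    rw [ContinuousMap.norm_le _ h0]
    rintro ⟨t, ht⟩
    have htpos := hpos t ht
    have htle : t ≤ ‖A‖ := (le_abs_self t).trans (spectrum.norm_le_norm_of_mem ht)
    have : ‖Real.sqrt t * (x ^ 2 + t)⁻¹‖ = Real.sqrt t * (x ^ 2 + t)⁻¹ := by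
      rw [Real.norm_eq_abs, abs_of_nonneg]; positivity
    show ‖Real.sqrt t * (x ^ 2 + t)⁻¹‖ ≤ _
    rw [this]
    apply mul_le_mul (Real.sqrt_le_sqrt htle)
    · apply inv_anti₀ (by positivity)
      nlinarith [hspec ht, Set.mem_Ici.mp (hspec ht)]
    · positivity
    · positivity
  have hbound : IntegrableOn (fun x : ℝ => Real.sqrt ‖A‖ * (x ^ 2 + δ)⁻¹) (Set.Ioi 0) :=
    (aux_integrable hδ).const_mul _
  have hGint : IntegrableOn G (Set.Ioi 0) := by
    refine Integrable.mono' hbound (hGcont.aestronglyMeasurable.restrict) ?_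
    exact Filter.Eventually.of_forall hnorm
  -- the integral of G
  have hI : (∫ x in Set.Ioi (0:ℝ), G x) = (Real.pi / 2) • (1 : C(spectrum ℝ A, ℝ)) := by
    ext t
    have h1 : (ContinuousMap.evalCLM ℝ t) (∫ x in Set.Ioi (0:ℝ), G x)
        = ∫ x in Set.Ioi (0:ℝ), (ContinuousMap.evalCLM ℝ t) (G x) :=
      (ContinuousLinearMap.integral_comp_comm _ hGint).symm
    have h2 : ∀ x : ℝ, (ContinuousMap.evalCLM ℝ t) (G x)
        = Real.sqrt (t : ℝ) * ((x:ℝ) ^ 2 + (t : ℝ))⁻¹ := fun x => rfl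
    calc (∫ x in Set.Ioi (0:ℝ), G x) t
        = ∫ x in Set.Ioi (0:ℝ), Real.sqrt (t:ℝ) * ((x:ℝ) ^ 2 + (t:ℝ))⁻¹ := by
          simpa [h2] using h1
      _ = Real.pi / 2 := aux_integral (hpos t t.2)
      _ = ((Real.pi / 2) • (1 : C(spectrum ℝ A, ℝ))) t := by simp
  -- conclusion
  have hfun : (fun x : ℝ => CFC.sqrt A * Ring.inverse (x ^ 2 • (1 : 𝓗 →L[ℂ] 𝓗) + A))
      = fun x : ℝ => ψ (G x) := by
    funext x; rw [key x, hψG x]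
  constructor
  · rw [hfun]
    exact ψ.integrable_comp hGint
  · rw [hfun]
    rw [ContinuousLinearMap.integral_comp_comm ψ hGint, hI, ContinuousLinearMap.map_smul]
    have hone : ψ (1 : C(spectrum ℝ A, ℝ)) = 1 := map_one φ
    have hsc : (2 / Real.pi) * (Real.pi / 2) = 1 := by
      field_simp
    rw [hone, smul_smul, hsc, one_smul]
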